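/- Let L be a symmetric positive definite m×m real matrix and let Y ∼ P_L. Then the m×m covariance matrix M of the indicator variables (1_{1∈Y},…,1_{m∈Y}) under P_L, i.e., M_{ab} := E_{P_L}[1_{a∈Y}1_{b∈Y}] − E_{P_L}[1_{a∈Y}]E_{P_L}[1_{b∈Y}], is positive definite. (Equivalently, with K := L(L+I)^{-1}, the matrix with diagonal entries K_{aa}(1−K_{aa}) and off-diagonal entries −(K_{ab})² is positive definite; this is the Fisher information of the DPP with respect to the item-wise parameters and underlies the strict convexity of ψ.) -/

import Mathlib

/-- The determinant of the principal submatrix of `M` with rows and columns in `A`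
(equal to `1` when `A = ∅`). -/
noncomputable def pminor {m : ℕ} (M : Matrix (Fin m) (Fin m) ℝ) (A : Finset (Fin m)) : ℝ :=
  (M.submatrix (fun i : A => (i : Fin m)) (fun j : A => (j : Fin m))).det

/-- The `L`-ensemble determinantal point process. -/
noncomputable def dppP {m : ℕ} (L : Matrix (Fin m) (Fin m) ℝ) (A : Finset (Fin m)) : ℝ :=
  pminor L A / (L + 1).det

open Matrix Finset

lemma posDef_submatrix_of_injective {n k : Type*} [Fintype n] [Fintype k] [DecidableEq n]
    {M : Matrix n n ℝ} (hM : M.PosDef) (e : k → n) (he : Function.Injective e) :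
    (M.submatrix e e).PosDef := by
  refine PosDef.of_dotProduct_mulVec_pos (hM.1.submatrix e) fun x hx => ?_
  set y : n → ℝ := Function.extend e x 0 with hy
  have hkey : ∀ c : n → ℝ, ∑ j, y j * c j = ∑ i, x i * c (e i) := by
    intro c
    have himg : ∑ j ∈ Finset.univ.image e, y j * c j = ∑ i, y (e i) * c (e i) :=
      Finset.sum_image (fun a _ b _ h => he h)
    rw [← Finset.sum_subset (Finset.subset_univ (Finset.univ.image e))
      (fun j _ hj => by
        have : ¬ ∃ i, e i = j := by
          rintro ⟨i, rfl⟩; exact hj (Finset.mem_image_of_mem e (Finset.mem_univ i))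
        simp [hy, Function.extend_apply' _ _ _ this]),
      himg]
    refine Finset.sum_congr rfl fun i _ => ?_
    rw [hy, he.extend_apply]
  have hy0 : y ≠ 0 := by
    intro h
    apply hx
    funext i
    have := congrFun h (e i)
    rwa [hy, he.extend_apply] at this
  have := hM.dotProduct_mulVec_pos hy0
  have heq : star y ⬝ᵥ M *ᵥ y = star x ⬝ᵥ (M.submatrix e e) *ᵥ x := by
    simp only [star_trivial, dotProduct, mulVec, submatrix_apply]
    rw [hkey]
    refine Finset.sum_congr rfl fun i _ => ?_
    congr 1
    rw [show ∑ j', M (e i) j' * y j' = ∑ j', y j' * M (e i) j' from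
      Finset.sum_congr rfl fun _ _ => mul_comm _ _, hkey]
    exact Finset.sum_congr rfl fun _ _ => mul_comm _ _
  rwa [heq] at this

lemma det_piecewise {m : ℕ} (L : Matrix (Fin m) (Fin m) ℝ) (S : Finset (Fin m)) :
    (Matrix.of (S.piecewise (L : Fin m → Fin m → ℝ) (1 : Matrix (Fin m) (Fin m) ℝ))).det
      = pminor L S := by
  classical
  set M : Matrix (Fin m) (Fin m) ℝ :=
    Matrix.of (S.piecewise (L : Fin m → Fin m → ℝ) (1 : Matrix (Fin m) (Fin m) ℝ))
  let e : {x // x ∈ S} ⊕ {x // x ∉ S} ≃ Fin m := Equiv.sumCompl (· ∈ S)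
  have h1 : M.submatrix e e =
      Matrix.fromBlocks
        (L.submatrix (fun i : S => (i : Fin m)) (fun j : S => (j : Fin m)))
        (L.submatrix (fun i : S => (i : Fin m)) (fun j : {x // x ∉ S} => (j : Fin m)))
        0 1 := by
    ext i j
    rcases i with i | i <;> rcases j with j | j <;>
      simp only [submatrix_apply, Equiv.sumCompl_apply_inl, Equiv.sumCompl_apply_inr,
        fromBlocks_apply₁₁, fromBlocks_apply₁₂, fromBlocks_apply₂₁, fromBlocks_apply₂₂,
        M, e, Matrix.of_apply]
    · exact congrFun (Finset.piecewise_eq_of_mem _ _ _ i.2) _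
    · exact congrFun (Finset.piecewise_eq_of_mem _ _ _ i.2) _
    · erw [Finset.piecewise_eq_of_notMem _ _ _ i.2]
      have : (i : Fin m) ≠ (j : Fin m) := fun h => i.2 (h ▸ j.2)
      simp [Matrix.one_apply, this]
    · erw [Finset.piecewise_eq_of_notMem _ _ _ i.2]
      simp only [Matrix.one_apply, Pi.zero_apply, Matrix.zero_apply]
      by_cases h : i = j
      · simp [h]
      · simp [h, Subtype.coe_injective.ne h]
  rw [← Matrix.det_submatrix_equiv_self e M, h1, Matrix.det_fromBlocks_zero₂₁, Matrix.det_one,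
    mul_one, pminor]

lemma det_add_one_eq_sum_pminor {m : ℕ} (L : Matrix (Fin m) (Fin m) ℝ) :
    (L + 1).det = ∑ S : Finset (Fin m), pminor L S := by
  classical
  have h := (Matrix.detRowAlternating (R := ℝ) (n := Fin m)).toMultilinearMap.map_add_univ
    (L : Fin m → Fin m → ℝ) (1 : Matrix (Fin m) (Fin m) ℝ)
  have h2 : (L + 1).det = ∑ s : Finset (Fin m),
      (Matrix.of (s.piecewise (L : Fin m → Fin m → ℝ) (1 : Matrix (Fin m) (Fin m) ℝ))).det := h
  rw [h2]
  exact Finset.sum_congr rfl fun s _ => det_piecewise L s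


lemma cov_quad {ι κ : Type*} [Fintype ι] [Fintype κ] (p : κ → ℝ) (χ : ι → κ → ℝ) (x : ι → ℝ) :
    ∑ a, x a * ∑ b, ((∑ A, p A * χ a A * χ b A)
        - (∑ A, p A * χ a A) * (∑ A, p A * χ b A)) * x b
      = (∑ A, p A * (∑ a, x a * χ a A) ^ 2) - (∑ A, p A * (∑ a, x a * χ a A)) ^ 2 := by
  set g : κ → ℝ := fun A => ∑ a, x a * χ a A with hg
  have hgA : ∀ A, g A = ∑ a, x a * χ a A := fun A => rfl
  set E1 : ι → ℝ := fun a => ∑ A, p A * χ a A with hE1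
  have h1 : ∀ a, ∑ b, (∑ A, p A * χ a A * χ b A) * x b = ∑ A, p A * χ a A * g A := by
    intro a
    simp_rw [Finset.sum_mul]
    rw [Finset.sum_comm]
    refine Finset.sum_congr rfl fun A _ => ?_
    rw [hgA, Finset.mul_sum]
    exact Finset.sum_congr rfl fun b _ => by ring
  have h2 : ∑ a, x a * ∑ A, p A * χ a A * g A = ∑ A, p A * g A ^ 2 := by
    simp_rw [Finset.mul_sum]
    rw [Finset.sum_comm]
    refine Finset.sum_congr rfl fun A _ => ?_
    calc ∑ a, x a * (p A * χ a A * g A) = ∑ a, (x a * χ a A) * (p A * g A) :=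
          Finset.sum_congr rfl fun a _ => by ring
      _ = (∑ a, x a * χ a A) * (p A * g A) := (Finset.sum_mul _ _ _).symm
      _ = p A * g A ^ 2 := by rw [← hgA]; ring
  have hd : ∑ b, x b * E1 b = ∑ A, p A * g A := by
    simp_rw [hE1, Finset.mul_sum]
    rw [Finset.sum_comm]
    refine Finset.sum_congr rfl fun A _ => ?_
    rw [hgA, Finset.mul_sum]
    exact Finset.sum_congr rfl fun b _ => by ring
  have h3 : ∀ a, ∑ b, (E1 a * E1 b) * x b = E1 a * ∑ b, x b * E1 b := by
    intro a
    rw [Finset.mul_sum]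
    exact Finset.sum_congr rfl fun b _ => by ring
  calc ∑ a, x a * ∑ b, ((∑ A, p A * χ a A * χ b A) - E1 a * E1 b) * x b
      = ∑ a, (x a * ∑ b, (∑ A, p A * χ a A * χ b A) * x b
          - x a * ∑ b, (E1 a * E1 b) * x b) := by
        refine Finset.sum_congr rfl fun a _ => ?_
        rw [← mul_sub, ← Finset.sum_sub_distrib]
        congr 1
        exact Finset.sum_congr rfl fun b _ => by ring
    _ = (∑ a, x a * ∑ b, (∑ A, p A * χ a A * χ b A) * x b)
          - ∑ a, x a * ∑ b, (E1 a * E1 b) * x b := Finset.sum_sub_distrib _ _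
    _ = (∑ A, p A * g A ^ 2) - (∑ A, p A * g A) ^ 2 := by
        rw [show (∑ a, x a * ∑ b, (∑ A, p A * χ a A * χ b A) * x b)
            = ∑ A, p A * g A ^ 2 by
          rw [← h2]; exact Finset.sum_congr rfl fun a _ => by rw [h1]]
        congr 1
        calc ∑ a, x a * ∑ b, (E1 a * E1 b) * x b
            = ∑ a, (x a * E1 a) * (∑ b, x b * E1 b) := by
              refine Finset.sum_congr rfl fun a _ => ?_
              rw [h3]; ring
          _ = (∑ a, x a * E1 a) * (∑ b, x b * E1 b) := (Finset.sum_mul _ _ _).symm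
          _ = (∑ A, p A * g A) ^ 2 := by rw [hd]; ring

theorem dpp_indicator_covariance_matrix_posDef (m : ℕ) (L : Matrix (Fin m) (Fin m) ℝ)
    (hsymm : L.IsSymm) (hL : L.PosDef) :
    (Matrix.of fun a b : Fin m =>
      (∑ A : Finset (Fin m),
          dppP L A * (if a ∈ A then 1 else 0) * (if b ∈ A then 1 else 0))
        - (∑ A : Finset (Fin m), dppP L A * (if a ∈ A then 1 else 0)) *
          (∑ A : Finset (Fin m), dppP L A * (if b ∈ A then 1 else 0))).PosDef := by
  classical
  set p : Finset (Fin m) → ℝ := dppP L with hpdef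
  have hdetpos : 0 < (L + 1).det := (hL.add_posSemidef Matrix.PosSemidef.one).det_pos
  have hp : ∀ A : Finset (Fin m), 0 < p A := by
    intro A
    have hsub : (L.submatrix (fun i : A => (i : Fin m)) (fun j : A => (j : Fin m))).PosDef :=
      posDef_submatrix_of_injective hL _ Subtype.coe_injective
    exact div_pos hsub.det_pos hdetpos
  have hsum : ∑ A : Finset (Fin m), p A = 1 := by
    rw [hpdef]
    simp only [dppP]
    rw [← Finset.sum_div, ← det_add_one_eq_sum_pminor, div_self (ne_of_gt hdetpos)]
  refine PosDef.of_dotProduct_mulVec_pos ?_ fun x hx => ?_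
  · rw [Matrix.IsHermitian]
    ext a b
    simp only [conjTranspose_apply, Matrix.of_apply, star_trivial]
    congr 1
    · exact Finset.sum_congr rfl fun A _ => by ring
    · exact mul_comm _ _
  · have hQ : star x ⬝ᵥ (Matrix.of fun a b : Fin m =>
        (∑ A : Finset (Fin m), p A * (if a ∈ A then 1 else 0) * (if b ∈ A then 1 else 0))
          - (∑ A : Finset (Fin m), p A * (if a ∈ A then 1 else 0)) *
            (∑ A : Finset (Fin m), p A * (if b ∈ A then 1 else 0))) *ᵥ x
        = ∑ a, x a * ∑ b,
            ((∑ A : Finset (Fin m), p A * (if a ∈ A then 1 else 0) * (if b ∈ A then 1 else 0))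
              - (∑ A : Finset (Fin m), p A * (if a ∈ A then 1 else 0)) *
                (∑ A : Finset (Fin m), p A * (if b ∈ A then 1 else 0))) * x b := by
      simp [dotProduct, mulVec]
    rw [hQ, cov_quad p (fun a A => if a ∈ A then 1 else 0) x]
    set g : Finset (Fin m) → ℝ := fun A => ∑ a, x a * (if a ∈ A then 1 else 0) with hg
    set c : ℝ := ∑ A : Finset (Fin m), p A * g A with hc
    have hvar : (∑ A : Finset (Fin m), p A * g A ^ 2) - c ^ 2
        = ∑ A : Finset (Fin m), p A * (g A - c) ^ 2 := by
      have e1 : ∀ A ∈ (Finset.univ : Finset (Finset (Fin m))), p A * (g A - c) ^ 2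
          = p A * g A ^ 2 - 2 * c * (p A * g A) + c ^ 2 * p A := fun A _ => by ring
      rw [Finset.sum_congr rfl e1, Finset.sum_add_distrib, Finset.sum_sub_distrib,
        ← Finset.mul_sum, ← Finset.mul_sum, ← hc, hsum]
      ring
    rw [hvar]
    obtain ⟨a, ha⟩ := Function.ne_iff.mp hx
    have hnonneg : ∀ A ∈ Finset.univ (α := Finset (Fin m)), 0 ≤ p A * (g A - c) ^ 2 :=
      fun A _ => mul_nonneg (hp A).le (sq_nonneg _)
    have hgempty : g ∅ = 0 := by simp [hg]
    have hgsingle : g {a} = x a := by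
      simp [hg, mul_ite]
    refine Finset.sum_pos' hnonneg ?_
    by_cases hc0 : c = 0
    · exact ⟨{a}, Finset.mem_univ _, by
        rw [hgsingle, hc0, sub_zero]
        exact mul_pos (hp _) (pow_two_pos_of_ne_zero ha)⟩
    · exact ⟨∅, Finset.mem_univ _, by
        rw [hgempty, zero_sub]
        exact mul_pos (hp _) (pow_two_pos_of_ne_zero (neg_ne_zero.mpr hc0))⟩
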